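/- Define $\theta' : \mathbb{R}^{\mathbb{N}} \to [0,1]^{\mathbb{N} \times \mathbb{Z}}$ by $\theta'(z)(m,k) = 0$ if $z(m) < k$, $\theta'(z)(m,k) = z(m)-k$ if $k \leq z(m) < k+1$, and $\theta'(z)(m,k) = 1$ if $k+1 \leq z(m)$. Then for all $z, w \in \mathbb{R}^{\mathbb{N}}$: the family $(m,k) \mapsto |\theta'(z)(m,k) - \theta'(w)(m,k)|$ is summable if and only if the family $m \mapsto |z(m)-w(m)|$ is summable. Hence $\theta'$ is a reduction of the $\ell_1$-equivalence on $\mathbb{R}^{\mathbb{N}}$ to the $\ell_1$-equivalence on $[0,1]^{\mathbb{N} \times \mathbb{Z}}$. -/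

import Mathlib

private noncomputable def ff (t : ℝ) (k : ℤ) : ℝ := min t (k+1) - min t k

private lemma ff_eq (t : ℝ) (k : ℤ) :
    ff t k = max 0 (min 1 (t - k)) := by
  unfold ff
  rcases le_total t k with h | h
  · rw [min_eq_left h, min_eq_left (h.trans (by linarith))]
    have : t - k ≤ 0 := by linarith
    simp [min_eq_right (this.trans zero_le_one), max_eq_left, this]
  rcases le_total t (k+1) with h2 | h2
  · rw [min_eq_right h, min_eq_left h2]
    have h3 : t - k ≤ 1 := by linarith
    have h4 : (0:ℝ) ≤ t - k := by linarith
    rw [min_eq_right h3, max_eq_right h4]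
  · rw [min_eq_right h, min_eq_right h2]
    have : (1:ℝ) ≤ t - k := by linarith
    rw [min_eq_left this, max_eq_right zero_le_one]
    ring

private lemma tele (G : ℤ → ℝ) (a : ℤ) : ∀ b, a ≤ b →
    ∑ k ∈ Finset.Ico a b, (G (k+1) - G k) = G b - G a := by
  refine Int.le_induction ?_ ?_
  · simp
  · intro n hn ih
    have hins : Finset.Ico a (n+1) = insert n (Finset.Ico a n) := by
      ext x; simp only [Finset.mem_Ico, Finset.mem_insert]; omega
    rw [hins, Finset.sum_insert (by simp), ih]
    ring

private lemma key (s t : ℝ) (h : s ≤ t) :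
    HasSum (fun k : ℤ => ff t k - ff s k) (t - s) := by
  set G : ℤ → ℝ := fun k => min t k - min s k with hG
  have hGlow : ∀ k : ℤ, (k:ℝ) ≤ s → G k = 0 := by
    intro k hk
    simp [hG, min_eq_right hk, min_eq_right (hk.trans h)]
  have hGhigh : ∀ k : ℤ, t ≤ (k:ℝ) → G k = t - s := by
    intro k hk
    simp [hG, min_eq_left hk, min_eq_left (h.trans hk)]
  have hterm : ∀ k : ℤ, ff t k - ff s k = G (k+1) - G k := by
    intro k; simp only [ff, hG]; push_cast; ring
  set a : ℤ := ⌊s⌋ with ha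
  set b : ℤ := max (⌈t⌉) a with hb
  have hab : a ≤ b := le_max_right _ _
  have hvanish : ∀ k ∉ Finset.Ico a b, ff t k - ff s k = 0 := by
    intro k hk
    rw [Finset.mem_Ico, not_and_or, not_le, not_lt] at hk
    rw [hterm]
    rcases hk with hk | hk
    · have h1 : ((k:ℝ)+1) ≤ s := by
        have : k + 1 ≤ a := hk
        calc ((k:ℝ)+1) ≤ (a:ℝ) := by exact_mod_cast this
          _ ≤ s := Int.floor_le s
      rw [hGlow _ (by push_cast at h1 ⊢; linarith), hGlow _ (by push_cast; linarith), sub_self]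
    · have h1 : t ≤ (k:ℝ) := by
        have : (⌈t⌉:ℤ) ≤ k := le_trans (le_max_left _ _) hk
        calc t ≤ (⌈t⌉:ℝ) := Int.le_ceil t
          _ ≤ (k:ℝ) := by exact_mod_cast this
      rw [hGhigh _ h1, hGhigh _ (by push_cast; linarith), sub_self]
  have hsum : HasSum (fun k : ℤ => ff t k - ff s k) _ := hasSum_sum_of_ne_finset_zero hvanish
  have : ∑ k ∈ Finset.Ico a b, (ff t k - ff s k) = t - s := by
    calc ∑ k ∈ Finset.Ico a b, (ff t k - ff s k)
        = ∑ k ∈ Finset.Ico a b, (G (k+1) - G k) := Finset.sum_congr rfl fun k _ => hterm k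
      _ = G b - G a := tele G a b hab
      _ = (t - s) - 0 := by
          rw [hGlow a (Int.floor_le s), hGhigh b ?_]
          calc t ≤ (⌈t⌉:ℝ) := Int.le_ceil t
            _ ≤ (b:ℝ) := by exact_mod_cast le_max_left _ _
      _ = t - s := by ring
  rwa [this] at hsum

private lemma ff_mono (k : ℤ) : Monotone (fun t => ff t k) := by
  intro s t h
  simp only [ff]
  rcases le_total s (k:ℝ) with hs | hs
  · rw [min_eq_left hs, min_eq_left (hs.trans (by linarith)), sub_self]
    rcases le_total t (k:ℝ) with ht | ht
    · rw [min_eq_left ht, min_eq_left (ht.trans (by linarith)), sub_self]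
    rcases le_total t ((k:ℝ)+1) with ht2 | ht2
    · rw [min_eq_left ht2, min_eq_right ht]; linarith
    · rw [min_eq_right ht2, min_eq_right ht]; linarith
  rcases le_total s ((k:ℝ)+1) with hs2 | hs2
  · rw [min_eq_left hs2, min_eq_right hs]
    rcases le_total t ((k:ℝ)+1) with ht2 | ht2
    · rw [min_eq_left ht2, min_eq_right (hs.trans h)]; linarith
    · rw [min_eq_right ht2, min_eq_right (hs.trans h)]; linarith
  · rw [min_eq_right hs2, min_eq_right hs, min_eq_right (le_trans hs2 h), min_eq_right (hs.trans h)]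

private lemma key_abs (s t : ℝ) :
    HasSum (fun k : ℤ => |ff t k - ff s k|) |t - s| := by
  rcases le_total s t with h | h
  · have hk := key s t h
    have : ∀ k : ℤ, |ff t k - ff s k| = ff t k - ff s k := by
      intro k
      exact abs_of_nonneg (sub_nonneg.2 (ff_mono k h))
    rw [abs_of_nonneg (sub_nonneg.2 h)]
    exact (hk.congr_fun fun k => this k)
  · have hk := key t s h
    have : ∀ k : ℤ, |ff t k - ff s k| = ff s k - ff t k := by
      intro k
      rw [abs_sub_comm]
      exact abs_of_nonneg (sub_nonneg.2 (ff_mono k h))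
    rw [abs_sub_comm, abs_of_nonneg (sub_nonneg.2 h)]
    exact (hk.congr_fun fun k => this k)

theorem stmt_17 (θ' : (ℕ → ℝ) → ℕ × ℤ → ℝ)
    (h1 : ∀ (z : ℕ → ℝ) (m : ℕ) (k : ℤ), z m < k → θ' z (m, k) = 0)
    (h2 : ∀ (z : ℕ → ℝ) (m : ℕ) (k : ℤ), (k : ℝ) ≤ z m → z m < k + 1 →
      θ' z (m, k) = z m - k)
    (h3 : ∀ (z : ℕ → ℝ) (m : ℕ) (k : ℤ), (k : ℝ) + 1 ≤ z m → θ' z (m, k) = 1) :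
    ∀ z w : ℕ → ℝ,
      Summable (fun q : ℕ × ℤ => |θ' z q - θ' w q|) ↔
        Summable (fun m => |z m - w m|) := by
  have hθ : ∀ (z : ℕ → ℝ) (m : ℕ) (k : ℤ), θ' z (m, k) = ff (z m) k := by
    intro z m k
    rw [ff_eq]
    rcases lt_or_ge (z m) k with h | h
    · rw [h1 z m k h]
      have : z m - k ≤ 0 := by linarith
      rw [min_eq_right (this.trans zero_le_one), max_eq_left this]
    rcases lt_or_ge (z m) (k+1) with h2' | h2'
    · rw [h2 z m k h (by push_cast at h2' ⊢; linarith)]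
      have h3' : z m - k ≤ 1 := by push_cast at h2'; linarith
      have h4 : (0:ℝ) ≤ z m - k := by linarith
      rw [min_eq_right h3', max_eq_right h4]
    · rw [h3 z m k (by push_cast at h2' ⊢; linarith)]
      have : (1:ℝ) ≤ z m - k := by push_cast at h2'; linarith
      rw [min_eq_left this, max_eq_right zero_le_one]
  intro z w
  have heq : (fun q : ℕ × ℤ => |θ' z q - θ' w q|)
      = fun q : ℕ × ℤ => |ff (z q.1) q.2 - ff (w q.1) q.2| := by
    funext q
    obtain ⟨m, k⟩ := q
    rw [hθ z m k, hθ w m k]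
  rw [heq]
  rw [summable_prod_of_nonneg (fun q => abs_nonneg _)]
  constructor
  · rintro ⟨-, h⟩
    refine h.congr fun m => ?_
    exact ((key_abs (w m) (z m)).tsum_eq)
  · intro h
    refine ⟨fun m => (key_abs (w m) (z m)).summable, ?_⟩
    refine h.congr fun m => ?_
    exact ((key_abs (w m) (z m)).tsum_eq).symm
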